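/- Let n ∈ ℕ, A : Fin n → Fin n → ℂ, let α ∈ W have total degree at most 1 in the ǔ-variables, and let β ∈ W contain no ǔ-variables. Then α ⋆ β − β ⋆ α = ħ · Σ_{j, i ∈ Fin n} A j i · (∂_{ǔ_j} α) · (∂_{u_i} β), where the product on the right-hand side is the ordinary (commutative) polynomial product in W. (This is the fibrewise content of Lemma 4.6: the star-commutator of a section of Ŝym Q* ⊗ P* with a ǔ-free element is ħ times a first-order pairing.) -/

import Mathlib

open MvPolynomial

noncomputable section

/-- The fibre of the Weyl bundle: polynomials in the variables `u_i = X (Sum.inl i)` and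
`ǔ_j = X (Sum.inr j)` over `R = ℂ[ħ]`. -/
abbrev Wn (n : ℕ) : Type := MvPolynomial (Fin n ⊕ Fin n) (Polynomial ℂ)

/-- Iterated formal partial derivative along a list of variables. -/
def pdList {σ : Type} [DecidableEq σ] (l : List σ) (a : MvPolynomial σ (Polynomial ℂ)) :
    MvPolynomial σ (Polynomial ℂ) :=
  l.foldr (fun i b => MvPolynomial.pderiv i b) a

/-- The star product with separation of variables on `Wn n`, with constant structure
coefficients `ω^{ǰi} = A j i`. -/
def starSV (n : ℕ) (A : Fin n → Fin n → ℂ) (a b : Wn n) : Wn n :=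
  ∑ r ∈ Finset.range (a.totalDegree + 1),
    MvPolynomial.C (Polynomial.C ((r.factorial : ℂ)⁻¹) * Polynomial.X ^ r) *
      ∑ I : Fin r → Fin n, ∑ J : Fin r → Fin n,
        MvPolynomial.C (Polynomial.C (∏ t, A (J t) (I t))) *
          pdList (List.ofFn fun t => (Sum.inr (J t) : Fin n ⊕ Fin n)) a *
          pdList (List.ofFn fun t => (Sum.inl (I t) : Fin n ⊕ Fin n)) b

namespace Stmt2Aux

variable {n : ℕ}

lemma pdList_nil (a : Wn n) : pdList [] a = a := rfl

lemma pdList_cons (x : Fin n ⊕ Fin n) (l : List (Fin n ⊕ Fin n)) (a : Wn n) :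
    pdList (x :: l) a = pderiv x (pdList l a) := rfl

lemma support_pderiv_subset (i : Fin n ⊕ Fin n) (a : Wn n) :
    (pderiv i a).support ⊆ a.support.image fun e => e - Finsupp.single i 1 := by
  classical
  have h : pderiv i a
      = ∑ e ∈ a.support, monomial (e - Finsupp.single i 1) (coeff e a * e i) := by
    conv_lhs => rw [a.as_sum]
    rw [map_sum]
    simp [pderiv_monomial]
  rw [h]
  refine MvPolynomial.support_sum.trans ?_
  intro d hd
  obtain ⟨e, he, hd⟩ := Finset.mem_biUnion.mp hd
  rw [MvPolynomial.support_monomial] at hd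
  split at hd
  · simp at hd
  · simp only [Finset.mem_singleton] at hd
    exact Finset.mem_image.mpr ⟨e, he, hd.symm⟩

lemma inv1_pderiv {k : ℕ} (i : Fin n ⊕ Fin n) {a : Wn n}
    (h : ∀ d ∈ a.support, (∑ j, d (Sum.inr j)) ≤ k) :
    ∀ d ∈ (pderiv i a).support, (∑ j, d (Sum.inr j)) ≤ k := by
  intro d hd
  obtain ⟨e, he, rfl⟩ := Finset.mem_image.mp (support_pderiv_subset i a hd)
  exact le_trans (Finset.sum_le_sum fun j _ => by
    rw [Finsupp.tsub_apply]; exact Nat.sub_le _ _) (h e he)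

lemma inv1_pdList {k : ℕ} (l : List (Fin n ⊕ Fin n)) {a : Wn n}
    (h : ∀ d ∈ a.support, (∑ j, d (Sum.inr j)) ≤ k) :
    ∀ d ∈ (pdList l a).support, (∑ j, d (Sum.inr j)) ≤ k := by
  induction l with
  | nil => exact h
  | cons x l ih => exact inv1_pderiv x ih

lemma inv0_pderiv (i : Fin n ⊕ Fin n) {a : Wn n}
    (h : ∀ d ∈ a.support, ∀ j, d (Sum.inr j) = 0) :
    ∀ d ∈ (pderiv i a).support, ∀ j, d (Sum.inr j) = 0 := by
  intro d hd j
  obtain ⟨e, he, rfl⟩ := Finset.mem_image.mp (support_pderiv_subset i a hd)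
  rw [Finsupp.tsub_apply]
  simp [h e he j]

lemma inv0_pdList (l : List (Fin n ⊕ Fin n)) {a : Wn n}
    (h : ∀ d ∈ a.support, ∀ j, d (Sum.inr j) = 0) :
    ∀ d ∈ (pdList l a).support, ∀ j, d (Sum.inr j) = 0 := by
  induction l with
  | nil => exact h
  | cons x l ih => exact inv0_pderiv x ih

lemma pderiv_inr_of_inv0 (j : Fin n) {a : Wn n}
    (h : ∀ d ∈ a.support, ∀ j, d (Sum.inr j) = 0) :
    pderiv (Sum.inr j : Fin n ⊕ Fin n) a = 0 := by
  apply pderiv_eq_zero_of_notMem_vars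
  rw [MvPolynomial.mem_vars]
  rintro ⟨d, hd, hj⟩
  exact (Finsupp.mem_support_iff.mp hj) (h d hd j)

lemma pderiv2_of_inv1 (j j' : Fin n) {a : Wn n}
    (h : ∀ d ∈ a.support, (∑ j, d (Sum.inr j)) ≤ 1) :
    pderiv (Sum.inr j' : Fin n ⊕ Fin n) (pderiv (Sum.inr j : Fin n ⊕ Fin n) a) = 0 := by
  classical
  conv_lhs => rw [a.as_sum]
  rw [map_sum, map_sum]
  apply Finset.sum_eq_zero
  intro d hd
  rw [pderiv_monomial, pderiv_monomial]
  rcases Nat.eq_zero_or_pos (d (Sum.inr j)) with h0 | h0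
  · simp [h0]
  · have h1 := h d hd
    have hz : (d - Finsupp.single (Sum.inr j) 1 : (Fin n ⊕ Fin n) →₀ ℕ) (Sum.inr j') = 0 := by
      rw [Finsupp.tsub_apply, Finsupp.single_apply]
      rcases eq_or_ne j' j with rfl | hne
      · have hle : d (Sum.inr j') ≤ 1 :=
          le_trans (Finset.single_le_sum (f := fun j'' => d (Sum.inr j''))
            (fun _ _ => Nat.zero_le _) (Finset.mem_univ j')) h1
        rw [if_pos rfl]
        omega
      · have hpair : d (Sum.inr j') + d (Sum.inr j) ≤ 1 := by
          have hs := Finset.sum_le_sum_of_subset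
            (f := fun j'' => d (Sum.inr j'')) (Finset.subset_univ {j', j})
          rw [Finset.sum_pair hne] at hs
          exact hs.trans h1
        have hj2 : (Sum.inr j : Fin n ⊕ Fin n) ≠ Sum.inr j' := by simp [hne.symm]
        rw [if_neg hj2]
        omega
    simp [hz]

lemma pdList_inr_zero_of_inv1 {m : ℕ} (J : Fin (m + 2) → Fin n) {a : Wn n}
    (h : ∀ d ∈ a.support, (∑ j, d (Sum.inr j)) ≤ 1) :
    pdList (List.ofFn fun t => (Sum.inr (J t) : Fin n ⊕ Fin n)) a = 0 := by
  rw [List.ofFn_succ, List.ofFn_succ, pdList_cons, pdList_cons]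
  exact pderiv2_of_inv1 _ _ (inv1_pdList _ h)

lemma pdList_inr_zero_of_inv0 {m : ℕ} (J : Fin (m + 1) → Fin n) {a : Wn n}
    (h : ∀ d ∈ a.support, ∀ j, d (Sum.inr j) = 0) :
    pdList (List.ofFn fun t => (Sum.inr (J t) : Fin n ⊕ Fin n)) a = 0 := by
  rw [List.ofFn_succ, pdList_cons]
  exact pderiv_inr_of_inv0 _ (inv0_pdList _ h)

lemma sum_fun_one {M : Type*} [AddCommMonoid M] (F : Fin n → Fin n → M) :
    (∑ I : Fin 1 → Fin n, ∑ J : Fin 1 → Fin n, F (I 0) (J 0)) = ∑ i, ∑ j, F i j := by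
  refine Fintype.sum_equiv (Equiv.funUnique (Fin 1) (Fin n)) _ _ fun I => ?_
  refine Fintype.sum_equiv (Equiv.funUnique (Fin 1) (Fin n)) _ _ fun J => ?_
  rfl

end Stmt2Aux

/-- if `α` has total degree at most `1` in the `ǔ`-variables and `β` contains
no `ǔ`-variables, then the star commutator is
`α ⋆ β − β ⋆ α = ħ Σ_{j i} A j i (∂_{ǔ_j} α) (∂_{u_i} β)`. -/
theorem stmt2 (n : ℕ) (A : Fin n → Fin n → ℂ) (α β : Wn n)
    (hα : ∀ d ∈ α.support, (∑ j, d (Sum.inr j)) ≤ 1)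
    (hβ : ∀ d ∈ β.support, ∀ j : Fin n, d (Sum.inr j) = 0) :
    starSV n A α β - starSV n A β α =
      MvPolynomial.C (Polynomial.X : Polynomial ℂ) *
        ∑ j : Fin n, ∑ i : Fin n,
          MvPolynomial.C (Polynomial.C (A j i)) *
            (MvPolynomial.pderiv (Sum.inr j : Fin n ⊕ Fin n) α) *
            (MvPolynomial.pderiv (Sum.inl i : Fin n ⊕ Fin n) β) := by
  classical
  have hconst : ∀ (a b : Wn n), (∀ d ∈ a.support, ∀ j, d (Sum.inr j) = 0) →
      starSV n A a b = a * b := by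
    intro a b ha
    unfold starSV
    rw [Finset.sum_eq_single_of_mem 0 (Finset.mem_range.mpr (Nat.succ_pos _))]
    · simp [Stmt2Aux.pdList_nil]
    · intro r hr hr0
      obtain ⟨m, rfl⟩ : ∃ m, r = m + 1 := ⟨r - 1, by omega⟩
      refine mul_eq_zero_of_right _
        (Finset.sum_eq_zero fun I _ => Finset.sum_eq_zero fun J _ => ?_)
      rw [Stmt2Aux.pdList_inr_zero_of_inv0 J ha, mul_zero, zero_mul]
  have hβα : starSV n A β α = β * α := hconst β α hβ
  rcases Nat.eq_zero_or_pos α.totalDegree with hdeg | hdeg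
  · have hα0 : ∀ d ∈ α.support, ∀ j, d (Sum.inr j) = 0 := by
      intro d hd j
      have h1 : (d.sum fun _ e => e) = 0 :=
        Nat.le_zero.mp (hdeg ▸ MvPolynomial.le_totalDegree hd)
      by_contra hne
      have hmem : (Sum.inr j : Fin n ⊕ Fin n) ∈ d.support := Finsupp.mem_support_iff.mpr hne
      have hle : d (Sum.inr j) ≤ ∑ x ∈ d.support, d x :=
        Finset.single_le_sum (fun _ _ => Nat.zero_le _) hmem
      have hs0 : ∑ x ∈ d.support, d x = 0 := by simpa [Finsupp.sum] using h1
      omega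
    have hz : ∀ j : Fin n, pderiv (Sum.inr j : Fin n ⊕ Fin n) α = 0 :=
      fun j => Stmt2Aux.pderiv_inr_of_inv0 j hα0
    rw [hconst α β hα0, hβα]
    simp [hz, mul_comm]
  · have hsplit : ∀ f : ℕ → Wn n,
        (∀ r ∈ Finset.range (α.totalDegree + 1), r ∉ ({0, 1} : Finset ℕ) → f r = 0) →
        ∑ r ∈ Finset.range (α.totalDegree + 1), f r = f 0 + f 1 := by
      intro f hf
      rw [← Finset.sum_subset (show ({0, 1} : Finset ℕ) ⊆ Finset.range (α.totalDegree + 1) by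
        intro x hx
        fin_cases hx <;> (rw [Finset.mem_range]; omega)) hf]
      rw [Finset.sum_insert (by norm_num), Finset.sum_singleton]
    have hmain : starSV n A α β = α * β +
        MvPolynomial.C (Polynomial.X : Polynomial ℂ) *
          ∑ j : Fin n, ∑ i : Fin n,
            MvPolynomial.C (Polynomial.C (A j i)) *
              (MvPolynomial.pderiv (Sum.inr j : Fin n ⊕ Fin n) α) *
              (MvPolynomial.pderiv (Sum.inl i : Fin n ⊕ Fin n) β) := by
      unfold starSV
      refine (hsplit _ ?_).trans ?_
      · intro r hr hr01
        obtain ⟨m, rfl⟩ : ∃ m, r = m + 2 := by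
          refine ⟨r - 2, ?_⟩
          simp only [Finset.mem_insert, Finset.mem_singleton] at hr01
          omega
        refine mul_eq_zero_of_right _
          (Finset.sum_eq_zero fun I _ => Finset.sum_eq_zero fun J _ => ?_)
        rw [Stmt2Aux.pdList_inr_zero_of_inv1 J hα, mul_zero, zero_mul]
      · refine congrArg₂ (· + ·) ?_ ?_
        · simp [Stmt2Aux.pdList_nil]
        · simp only [Nat.factorial_one, Nat.cast_one, inv_one, map_one, one_mul, pow_one,
            List.ofFn_succ, List.ofFn_zero, Stmt2Aux.pdList_cons, Stmt2Aux.pdList_nil,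
            Fin.prod_univ_one]
          congr 1
          rw [Stmt2Aux.sum_fun_one (fun i j => MvPolynomial.C (Polynomial.C (A j i)) *
            (MvPolynomial.pderiv (Sum.inr j : Fin n ⊕ Fin n) α) *
            (MvPolynomial.pderiv (Sum.inl i : Fin n ⊕ Fin n) β))]
          exact Finset.sum_comm
    rw [hmain, hβα, mul_comm β α]
    exact add_sub_cancel_left _ _


end
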